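/- arXiv:2106.08480 — 6 statements merged into one kernel-verified Lean document; each statement's English description precedes it below -/
import Mathlib

section
/- Let ψ₀(x₁,x₂,x₃) = exp(−(x₁²+x₂²+x₃²)/2) and let ψ = ψ₀·(1,−1,−1,−1)ᵗ : ℝ³ → ℂ⁴. Then F* ψ = 0, where F* = H₂ + i x₃ and H₂ = σ₁⊗(D₁σ₁ + D₂σ₂ + D₃σ₃) + x₁·σ₂⊗I₂ + x₂·σ₃⊗I₂ with D_j = −i∂_j (Kronecker products of 2×2 matrices giving 4×4 matrix coefficients). -/
open Matrix Kronecker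

/-- The first Pauli matrix. -/
noncomputable def pauli1 : Matrix (Fin 2) (Fin 2) ℂ := !![0, 1; 1, 0]

/-- The second Pauli matrix. -/
noncomputable def pauli2 : Matrix (Fin 2) (Fin 2) ℂ := !![0, -Complex.I; Complex.I, 0]

/-- The third Pauli matrix. -/
noncomputable def pauli3 : Matrix (Fin 2) (Fin 2) ℂ := !![1, 0; 0, -1]

/-- The Gaussian spinor `ψ = e^{-|x|²/2} (1,-1,-1,-1)ᵗ : ℝ³ → ℂ⁴`. -/
noncomputable def gaussSpinor (x₁ x₂ x₃ : ℝ) : Fin 2 × Fin 2 → ℂ :=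
  fun i => Complex.exp (-((x₁ : ℂ) ^ 2 + (x₂ : ℂ) ^ 2 + (x₃ : ℂ) ^ 2) / 2) *
    (if i = ((0 : Fin 2), (0 : Fin 2)) then 1 else -1)

lemma key (f : ℝ → ℂ) (c : ℂ) (x : ℝ) (hf : ∀ t : ℝ, f t = (t:ℂ)^2 + c) :
    HasDerivAt (fun t : ℝ => Complex.exp (-(f t) / 2)) (-(x:ℂ) * Complex.exp (-(f x) / 2)) x := by
  have h1 : HasDerivAt (fun t : ℝ => (t:ℂ)) 1 x := by
    exact Complex.ofRealCLM.hasDerivAt (x := x)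
  have h2 : HasDerivAt f (2 * x) x := by
    have := (h1.mul h1).add_const c
    simp only [Pi.mul_apply, ← pow_two, ← hf] at this
    convert this using 1
    · rfl
    ring
  have h3 := ((h2.neg.div_const 2).cexp)
  simp only [Pi.neg_apply] at h3
  convert h3 using 1
  ring

lemma d1 (x₁ x₂ x₃ : ℝ) (i : Fin 2 × Fin 2) :
    deriv (fun t : ℝ => gaussSpinor t x₂ x₃ i) x₁ = -(x₁:ℂ) * gaussSpinor x₁ x₂ x₃ i := by
  have := (key (fun t : ℝ => (t:ℂ)^2 + ((x₂:ℂ)^2 + (x₃:ℂ)^2)) _ x₁ (fun _ => rfl)).mul_const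
    (if i = ((0 : Fin 2), (0 : Fin 2)) then (1:ℂ) else -1)
  have h := this.deriv
  simp only [gaussSpinor, add_assoc]
  rw [h]; ring

lemma d2 (x₁ x₂ x₃ : ℝ) (i : Fin 2 × Fin 2) :
    deriv (fun t : ℝ => gaussSpinor x₁ t x₃ i) x₂ = -(x₂:ℂ) * gaussSpinor x₁ x₂ x₃ i := by
  have := (key (fun t : ℝ => (t:ℂ)^2 + ((x₁:ℂ)^2 + (x₃:ℂ)^2)) _ x₂ (fun _ => rfl)).mul_const
    (if i = ((0 : Fin 2), (0 : Fin 2)) then (1:ℂ) else -1)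
  have h := this.deriv
  have e : ∀ t : ℝ, (x₁:ℂ)^2 + (t:ℂ)^2 + (x₃:ℂ)^2 = (t:ℂ)^2 + ((x₁:ℂ)^2 + (x₃:ℂ)^2) := by
    intro t; ring
  simp only [gaussSpinor, e]
  rw [h]; ring

lemma d3 (x₁ x₂ x₃ : ℝ) (i : Fin 2 × Fin 2) :
    deriv (fun t : ℝ => gaussSpinor x₁ x₂ t i) x₃ = -(x₃:ℂ) * gaussSpinor x₁ x₂ x₃ i := by
  have := (key (fun t : ℝ => (t:ℂ)^2 + ((x₁:ℂ)^2 + (x₂:ℂ)^2)) _ x₃ (fun _ => rfl)).mul_const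
    (if i = ((0 : Fin 2), (0 : Fin 2)) then (1:ℂ) else -1)
  have h := this.deriv
  have e : ∀ t : ℝ, (x₁:ℂ)^2 + (x₂:ℂ)^2 + (t:ℂ)^2 = (t:ℂ)^2 + ((x₁:ℂ)^2 + (x₂:ℂ)^2) := by
    intro t; ring
  simp only [gaussSpinor, e]
  rw [h]; ring

/-- `F* ψ = 0` where `F* = H₂ + i x₃` and
`H₂ = σ₁⊗(D₁σ₁ + D₂σ₂ + D₃σ₃) + x₁ σ₂⊗I₂ + x₂ σ₃⊗I₂`, with `D_j = -i ∂_j`. -/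
theorem stmt_3 :
    ∀ x₁ x₂ x₃ : ℝ,
      (pauli1 ⊗ₖ pauli1).mulVec
          (fun i => -Complex.I * deriv (fun t : ℝ => gaussSpinor t x₂ x₃ i) x₁)
        + (pauli1 ⊗ₖ pauli2).mulVec
            (fun i => -Complex.I * deriv (fun t : ℝ => gaussSpinor x₁ t x₃ i) x₂)
        + (pauli1 ⊗ₖ pauli3).mulVec
            (fun i => -Complex.I * deriv (fun t : ℝ => gaussSpinor x₁ x₂ t i) x₃)
        + (x₁ : ℂ) • (pauli2 ⊗ₖ (1 : Matrix (Fin 2) (Fin 2) ℂ)).mulVec (gaussSpinor x₁ x₂ x₃)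
        + (x₂ : ℂ) • (pauli3 ⊗ₖ (1 : Matrix (Fin 2) (Fin 2) ℂ)).mulVec (gaussSpinor x₁ x₂ x₃)
        + (Complex.I * (x₃ : ℂ)) • gaussSpinor x₁ x₂ x₃ = 0 := by
  intro x₁ x₂ x₃
  funext i
  simp only [d1, d2, d3, Pi.add_apply, Pi.smul_apply, Matrix.mulVec, dotProduct,
    Fintype.sum_prod_type, Fin.sum_univ_two, kroneckerMap_apply, Pi.zero_apply,
    pauli1, pauli2, pauli3, smul_eq_mul, Matrix.one_apply]
  obtain ⟨a, b⟩ := i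
  fin_cases a <;> fin_cases b <;>
    simp [gaussSpinor, Matrix.cons_val_zero, Matrix.cons_val_one, Prod.ext_iff] <;>
      ring_nf <;> simp [Complex.I_sq]
end

section
/- Let κ ≥ 1, n = 2^κ, and let γ⁰, γ¹, …, γ^{2κ} ∈ M_n(ℂ) be Hermitian matrices satisfying γᵃγᵇ + γᵇγᵃ = 2δ_{ab} Iₙ for all a, b ∈ {0, 1, …, 2κ} and the orientation condition γ¹γ²⋯γ^{2κ}γ⁰ = i^κ Iₙ. Then for every function j : {1, …, 2κ} → {1, …, 2κ}: the trace tr(γ⁰ γ^{j(1)} γ^{j(2)} ⋯ γ^{j(2κ)}) equals 0 if j is not a bijection, and equals (2i)^κ · sgn(j) if j is a permutation of {1, …, 2κ} with signature sgn(j). -/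
private lemma map_id_of_fixed {α : Type*} (f : α → α) :
    ∀ (l : List α), (∀ a ∈ l, f a = a) → l.map f = l
  | [], _ => rfl
  | a :: t, h => by
    simp only [List.map_cons, h a List.mem_cons_self,
      map_id_of_fixed f t (fun b hb => h b (List.mem_cons_of_mem a hb))]

private lemma anticomm_prod {R : Type*} [Ring R] (v : R) :
    ∀ (l : List R), (∀ w ∈ l, v * w = -(w * v)) →
      v * l.prod = ((-1 : ℤ) ^ l.length) • (l.prod * v)
  | [], _ => by simp
  | w :: t, h => by
    have h1 : v * w = -(w * v) := h w List.mem_cons_self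
    have h2 := anticomm_prod v t (fun x hx => h x (List.mem_cons_of_mem w hx))
    calc v * (w :: t).prod = (v * w) * t.prod := by rw [List.prod_cons, mul_assoc]
    _ = -(w * (v * t.prod)) := by rw [h1, neg_mul, mul_assoc]
    _ = -(w * (((-1 : ℤ) ^ t.length) • (t.prod * v))) := by rw [h2]
    _ = ((-1 : ℤ) ^ (w :: t).length) • ((w :: t).prod * v) := by
        simp only [List.length_cons, List.prod_cons, pow_succ, mul_smul,
          mul_smul_comm, neg_one_zsmul, mul_assoc, smul_neg, neg_neg]

private lemma swap_core {R : Type*} [Ring R] {α : Type*} [DecidableEq α]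
    (f : α → R) (x y : α) (hxy : x ≠ y)
    (hanti : ∀ a b, a ≠ b → f a * f b = -(f b * f a))
    (l₁ l₂ l₃ : List α) (hnd : (l₁ ++ x :: (l₂ ++ y :: l₃)).Nodup) :
    ((l₁ ++ x :: (l₂ ++ y :: l₃)).map (fun t => f (Equiv.swap x y t))).prod =
      -(((l₁ ++ x :: (l₂ ++ y :: l₃)).map f).prod) := by
  simp only [List.nodup_append, List.nodup_cons, List.mem_append, List.mem_cons,
    List.disjoint_left] at hnd
  obtain ⟨-, ⟨hx23, -, ⟨hy3, -⟩, h2⟩, h1⟩ := hnd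
  push_neg at hx23
  replace h2 : ∀ {a}, a ∈ l₂ → a ≠ y ∧ a ∉ l₃ := fun ha =>
    ⟨h2 _ ha _ (Or.inl rfl), fun h => h2 _ ha _ (Or.inr h) rfl⟩
  replace h1 : ∀ {a}, a ∈ l₁ → a ≠ x ∧ a ∉ l₂ ∧ a ≠ y ∧ a ∉ l₃ := fun ha =>
    ⟨h1 _ ha _ (Or.inl rfl), fun h => h1 _ ha _ (Or.inr (Or.inl h)) rfl,
      h1 _ ha _ (Or.inr (Or.inr (Or.inl rfl))), fun h => h1 _ ha _ (Or.inr (Or.inr (Or.inr h))) rfl⟩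
  have fix1 : ∀ a ∈ l₁, Equiv.swap x y a = a := fun a ha =>
    Equiv.swap_apply_of_ne_of_ne (h1 ha).1 (h1 ha).2.2.1
  have fix2 : ∀ a ∈ l₂, Equiv.swap x y a = a := fun a ha =>
    Equiv.swap_apply_of_ne_of_ne (fun h => hx23.1 (h ▸ ha)) (h2 ha).1
  have fix3 : ∀ a ∈ l₃, Equiv.swap x y a = a := fun a ha =>
    Equiv.swap_apply_of_ne_of_ne (fun h => hx23.2.2 (h ▸ ha)) (fun h => hy3 (h ▸ ha))
  have hmap : (l₁ ++ x :: (l₂ ++ y :: l₃)).map (fun t => f (Equiv.swap x y t)) =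
      (l₁ ++ y :: (l₂ ++ x :: l₃)).map f := by
    have : (l₁ ++ x :: (l₂ ++ y :: l₃)).map (Equiv.swap x y) =
        l₁ ++ y :: (l₂ ++ x :: l₃) := by
      simp only [List.map_append, List.map_cons, Equiv.swap_apply_left,
        Equiv.swap_apply_right, map_id_of_fixed _ _ fix1, map_id_of_fixed _ _ fix2,
        map_id_of_fixed _ _ fix3]
    rw [show (fun t => f (Equiv.swap x y t)) = f ∘ (Equiv.swap x y) from rfl,
      ← List.map_map, this]
  rw [hmap]
  set A := (l₁.map f).prod
  set B := (l₂.map f).prod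
  set C := (l₃.map f).prod
  set e : ℤ := (-1 : ℤ) ^ (l₂.map f).length with he
  have hyB : f y * B = e • (B * f y) := anticomm_prod (f y) (l₂.map f) (by
    rintro w hw
    obtain ⟨z, hz, rfl⟩ := List.mem_map.mp hw
    exact hanti y z (fun h => (h2 hz).1 (h.symm)))
  have hxB : f x * B = e • (B * f x) := anticomm_prod (f x) (l₂.map f) (by
    rintro w hw
    obtain ⟨z, hz, rfl⟩ := List.mem_map.mp hw
    exact hanti x z (fun h => hx23.1 (h ▸ hz)))
  have hyx : f y * f x = -(f x * f y) := hanti y x hxy.symm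
  simp only [List.map_append, List.map_cons, List.prod_append, List.prod_cons]
  calc A * (f y * (B * (f x * C)))
      = A * ((f y * B) * (f x * C)) := by rw [mul_assoc]
    _ = e • (A * (B * (f y * (f x * C)))) := by
        rw [hyB]; simp only [smul_mul_assoc, mul_smul_comm, mul_assoc]
    _ = e • (A * (B * (-(f x * (f y * C))))) := by
        rw [← mul_assoc (f y), hyx]; simp only [neg_mul, mul_assoc]
    _ = -(e • (A * (B * (f x * (f y * C))))) := by simp
    _ = -(A * ((f x * B) * (f y * C))) := by
        rw [hxB]; simp only [smul_mul_assoc, mul_smul_comm, mul_assoc, smul_neg, neg_neg]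
    _ = -(A * (f x * (B * (f y * C)))) := by rw [mul_assoc]

private lemma swap_prod {R : Type*} [Ring R] {α : Type*} [DecidableEq α]
    (f : α → R) (x y : α) (hxy : x ≠ y)
    (hanti : ∀ a b, a ≠ b → f a * f b = -(f b * f a))
    (l : List α) (hnd : l.Nodup) (hx : x ∈ l) (hy : y ∈ l) :
    (l.map (fun t => f (Equiv.swap x y t))).prod = -((l.map f).prod) := by
  obtain ⟨s, t, rfl⟩ := List.append_of_mem hx
  have hy' : y ∈ s ∨ y ∈ t := by
    rcases List.mem_append.mp hy with h | h
    · exact Or.inl h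
    · rcases List.mem_cons.mp h with h | h
      · exact absurd h.symm hxy
      · exact Or.inr h
  rcases hy' with h | h
  · obtain ⟨s₁, s₂, rfl⟩ := List.append_of_mem h
    have : s₁ ++ y :: s₂ ++ x :: t = s₁ ++ y :: (s₂ ++ x :: t) := by simp
    rw [this] at hnd ⊢
    rw [show Equiv.swap x y = Equiv.swap y x from Equiv.swap_comm x y]
    exact swap_core f y x hxy.symm hanti s₁ s₂ t hnd
  · obtain ⟨t₁, t₂, rfl⟩ := List.append_of_mem h
    exact swap_core f x y hxy hanti s t₁ t₂ hnd

private lemma perm_prod {R : Type*} [Ring R] {m : ℕ}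
    (g : Fin m → R) (hanti : ∀ a b, a ≠ b → g a * g b = -(g b * g a)) :
    ∀ σ : Equiv.Perm (Fin m),
      ((List.finRange m).map (fun t => g (σ t))).prod =
        ((Equiv.Perm.sign σ : ℤ)) • ((List.finRange m).map g).prod := by
  intro σ
  refine Equiv.Perm.swap_induction_on' σ (by simp) ?_
  intro f x y hxy ih
  have key : ((List.finRange m).map (fun t => g ((f * Equiv.swap x y) t))).prod =
      -(((List.finRange m).map (fun t => g (f t))).prod) := by
    have := swap_prod (fun t => g (f t)) x y hxy
      (fun a b hab => hanti (f a) (f b) (fun h => hab (f.injective h)))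
      (List.finRange m) (List.nodup_finRange m) (List.mem_finRange x)
      (List.mem_finRange y)
    simpa using this
  rw [key, ih, Equiv.Perm.sign_mul, Equiv.Perm.sign_swap hxy]
  simp [mul_smul]


/-- trace identity for an oriented Hermitian Clifford family with
chirality element `γ⁰`: `tr(γ⁰ γ^{j(1)} ⋯ γ^{j(2κ)})` vanishes unless `j` is a
permutation, in which case it equals `(2i)^κ sgn(j)`. -/
theorem stmt_6 (κ : ℕ) (hκ : 1 ≤ κ)
    (γ0 : Matrix (Fin (2 ^ κ)) (Fin (2 ^ κ)) ℂ)
    (γ : Fin (2 * κ) → Matrix (Fin (2 ^ κ)) (Fin (2 ^ κ)) ℂ)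
    (hherm0 : γ0.IsHermitian) (hherm : ∀ a, (γ a).IsHermitian)
    (hcl : ∀ a b, γ a * γ b + γ b * γ a =
      if a = b then (2 : ℂ) • (1 : Matrix (Fin (2 ^ κ)) (Fin (2 ^ κ)) ℂ) else 0)
    (hcl0 : ∀ a, γ0 * γ a + γ a * γ0 = 0)
    (hsq0 : γ0 * γ0 = 1)
    (horient : ((List.finRange (2 * κ)).map γ).prod * γ0 =
      Complex.I ^ κ • (1 : Matrix (Fin (2 ^ κ)) (Fin (2 ^ κ)) ℂ)) :
    ∀ j : Fin (2 * κ) → Fin (2 * κ),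
      Matrix.trace (γ0 * ((List.finRange (2 * κ)).map (fun t => γ (j t))).prod) =
        if hb : Function.Bijective j then
          (2 * Complex.I) ^ κ * ((Equiv.Perm.sign (Equiv.ofBijective j hb) : ℤ) : ℂ)
        else 0 := by
  intro j
  have hanti : ∀ a b, a ≠ b → γ a * γ b = -(γ b * γ a) := by
    intro a b hab
    have h := hcl a b
    rw [if_neg hab] at h
    exact eq_neg_of_add_eq_zero_left h
  have hsq : ∀ a, γ a * γ a = 1 := by
    intro a
    have h := hcl a a
    rw [if_pos rfl] at h
    have h2 : (2 : ℂ) • (γ a * γ a) = (2 : ℂ) • (1 : Matrix (Fin (2 ^ κ)) (Fin (2 ^ κ)) ℂ) := by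
      rw [two_smul]; exact h
    exact smul_right_injective _ two_ne_zero h2
  set P := ((List.finRange (2 * κ)).map (fun t => γ (j t))).prod with hP
  by_cases hb : Function.Bijective j
  · rw [dif_pos hb]
    set σ := Equiv.ofBijective j hb with hσ
    have hPs : P = ((Equiv.Perm.sign σ : ℤ)) • ((List.finRange (2 * κ)).map γ).prod :=
      perm_prod γ hanti σ
    have hprod : ((List.finRange (2 * κ)).map γ).prod = Complex.I ^ κ • γ0 := by
      have h := congrArg (fun X => X * γ0) horient
      simpa [mul_assoc, hsq0, Matrix.smul_mul] using h
    rw [hPs, hprod, mul_smul_comm, mul_smul_comm, hsq0, Matrix.trace_smul,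
      Matrix.trace_smul, Matrix.trace_one]
    simp only [zsmul_eq_mul, smul_eq_mul, Fintype.card_fin]
    push_cast
    rw [mul_pow]
    ring
  · rw [dif_neg hb]
    have hnsurj : ¬ Function.Surjective j := fun h =>
      hb (Finite.surjective_iff_bijective.mp h)
    rw [Function.Surjective] at hnsurj
    push_neg at hnsurj
    obtain ⟨c, hc⟩ := hnsurj
    have hcP : γ c * P = P * γ c := by
      have h := anticomm_prod (γ c) ((List.finRange (2 * κ)).map fun t => γ (j t)) (by
        rintro w hw
        obtain ⟨t, -, rfl⟩ := List.mem_map.mp hw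
        exact hanti c (j t) (fun h => hc t h.symm))
      have hlen : (((List.finRange (2 * κ)).map fun t => γ (j t))).length = 2 * κ := by simp
      rw [hlen, (even_two_mul κ).neg_one_pow, one_smul] at h
      exact h
    have h1 : γ c * γ0 = -(γ0 * γ c) := eq_neg_of_add_eq_zero_right (hcl0 c)
    have e1 : γ c * (γ0 * P * γ c) = -(γ0 * P) := by
      calc γ c * (γ0 * P * γ c) = ((γ c * γ0) * P) * γ c := by noncomm_ring
        _ = -(γ0 * (γ c * P) * γ c) := by rw [h1]; noncomm_ring
        _ = -(γ0 * P * (γ c * γ c)) := by rw [hcP]; noncomm_ring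
        _ = -(γ0 * P) := by rw [hsq c, mul_one]
    have e2 : Matrix.trace (γ0 * P) = Matrix.trace (γ c * (γ0 * P * γ c)) := by
      conv_rhs => rw [Matrix.trace_mul_comm]
      rw [mul_assoc (γ0 * P), hsq c, mul_one]
    have e3 : Matrix.trace (γ0 * P) = -(Matrix.trace (γ0 * P)) := by
      conv_lhs => rw [e2, e1, Matrix.trace_neg]
    linear_combination e3 / 2
end

section
/- Let f : ℝᵐ → ℝᵐ and g : ℝⁿ → ℝⁿ be maps whose zero sets f⁻¹({0}) and g⁻¹({0}) are finite, with f (resp. g) differentiable at each of its zeros with invertible derivative there. Define F : ℝᵐ × ℝⁿ → ℝᵐ × ℝⁿ by F(x, y) = (f(x), g(y)). Then F⁻¹({0}) = f⁻¹({0}) × g⁻¹({0}) is finite, F is differentiable at each of its zeros with invertible derivative, and Σ_{z ∈ F⁻¹({0})} sign(det DF(z)) = (Σ_{x ∈ f⁻¹({0})} sign(det Df(x))) · (Σ_{y ∈ g⁻¹({0})} sign(det Dg(y))). -/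
open Set

lemma my_sign_mul (a b : ℝ) (ha : a ≠ 0) (hb : b ≠ 0) :
    Real.sign (a * b) = Real.sign a * Real.sign b := by
  rcases ha.lt_or_gt with ha' | ha' <;> rcases hb.lt_or_gt with hb' | hb'
  · rw [Real.sign_of_pos (mul_pos_of_neg_of_neg ha' hb'), Real.sign_of_neg ha',
      Real.sign_of_neg hb']; ring
  · rw [Real.sign_of_neg (mul_neg_of_neg_of_pos ha' hb'), Real.sign_of_neg ha',
      Real.sign_of_pos hb']; ring
  · rw [Real.sign_of_neg (mul_neg_of_pos_of_neg ha' hb'), Real.sign_of_pos ha',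
      Real.sign_of_neg hb']; ring
  · rw [Real.sign_of_pos (mul_pos ha' hb'), Real.sign_of_pos ha', Real.sign_of_pos hb']; ring

lemma my_det_prodMap {m n : ℕ} (A : (Fin m → ℝ) →L[ℝ] (Fin m → ℝ))
    (B : (Fin n → ℝ) →L[ℝ] (Fin n → ℝ)) :
    (A.prodMap B).det = A.det * B.det := by
  show LinearMap.det _ = LinearMap.det _ * LinearMap.det _
  rw [ContinuousLinearMap.coe_prodMap]
  let b₁ := Pi.basisFun ℝ (Fin m)
  let b₂ := Pi.basisFun ℝ (Fin n)
  rw [← LinearMap.det_toMatrix (b₁.prod b₂), ← LinearMap.det_toMatrix b₁,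
    ← LinearMap.det_toMatrix b₂, LinearMap.toMatrix_prodMap,
    Matrix.det_fromBlocks_zero₁₂]

/-- multiplicativity of the signed zero count (topological
degree at the regular value 0) for the product map `F(x,y) = (f x, g y)`. -/
theorem stmt_11 (m n : ℕ)
    (f : (Fin m → ℝ) → (Fin m → ℝ)) (g : (Fin n → ℝ) → (Fin n → ℝ))
    (hf : (f ⁻¹' {0}).Finite) (hg : (g ⁻¹' {0}).Finite)
    (hfd : ∀ x ∈ f ⁻¹' {0}, DifferentiableAt ℝ f x ∧ (fderiv ℝ f x).det ≠ 0)
    (hgd : ∀ y ∈ g ⁻¹' {0}, DifferentiableAt ℝ g y ∧ (fderiv ℝ g y).det ≠ 0) :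
    ((fun p : (Fin m → ℝ) × (Fin n → ℝ) => (f p.1, g p.2)) ⁻¹' {0} =
        (f ⁻¹' {0}) ×ˢ (g ⁻¹' {0})) ∧
    ((fun p : (Fin m → ℝ) × (Fin n → ℝ) => (f p.1, g p.2)) ⁻¹' {0}).Finite ∧
    (∀ z ∈ (fun p : (Fin m → ℝ) × (Fin n → ℝ) => (f p.1, g p.2)) ⁻¹' {0},
      DifferentiableAt ℝ (fun p : (Fin m → ℝ) × (Fin n → ℝ) => (f p.1, g p.2)) z ∧
      (fderiv ℝ (fun p : (Fin m → ℝ) × (Fin n → ℝ) => (f p.1, g p.2)) z).det ≠ 0) ∧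
    (∑ᶠ z ∈ (fun p : (Fin m → ℝ) × (Fin n → ℝ) => (f p.1, g p.2)) ⁻¹' {0},
        Real.sign ((fderiv ℝ (fun p : (Fin m → ℝ) × (Fin n → ℝ) => (f p.1, g p.2)) z).det)) =
      (∑ᶠ x ∈ f ⁻¹' {0}, Real.sign ((fderiv ℝ f x).det)) *
        (∑ᶠ y ∈ g ⁻¹' {0}, Real.sign ((fderiv ℝ g y).det)) := by
  set F : (Fin m → ℝ) × (Fin n → ℝ) → (Fin m → ℝ) × (Fin n → ℝ) :=
    fun p => (f p.1, g p.2) with hF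
  have hpre : F ⁻¹' {0} = (f ⁻¹' {0}) ×ˢ (g ⁻¹' {0}) := by
    ext p
    simp [hF, Prod.ext_iff, Set.mem_prod]
  have hderiv : ∀ z ∈ F ⁻¹' {0},
      HasFDerivAt F ((fderiv ℝ f z.1).prodMap (fderiv ℝ g z.2)) z := by
    intro z hz
    rw [hpre] at hz
    have h1 := (hfd z.1 hz.1).1.hasFDerivAt
    have h2 := (hgd z.2 hz.2).1.hasFDerivAt
    exact h1.prodMap z h2
  have hfderiv : ∀ z ∈ F ⁻¹' {0},
      fderiv ℝ F z = (fderiv ℝ f z.1).prodMap (fderiv ℝ g z.2) :=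
    fun z hz => (hderiv z hz).fderiv
  have hdet : ∀ z ∈ F ⁻¹' {0},
      (fderiv ℝ F z).det = (fderiv ℝ f z.1).det * (fderiv ℝ g z.2).det := by
    intro z hz
    rw [hfderiv z hz, my_det_prodMap]
  refine ⟨hpre, ?_, ?_, ?_⟩
  · rw [hpre]; exact hf.prod hg
  · intro z hz
    have hz' := hz; rw [hpre] at hz'
    refine ⟨(hderiv z hz).differentiableAt, ?_⟩
    rw [hdet z hz]
    exact mul_ne_zero (hfd z.1 hz'.1).2 (hgd z.2 hz'.2).2
  · have hcoe : F ⁻¹' {0} = ↑(hf.toFinset ×ˢ hg.toFinset) := by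
      rw [hpre, Finset.coe_product, hf.coe_toFinset, hg.coe_toFinset]
    calc (∑ᶠ z ∈ F ⁻¹' {0}, Real.sign ((fderiv ℝ F z).det))
        = ∑ z ∈ hf.toFinset ×ˢ hg.toFinset, Real.sign ((fderiv ℝ F z).det) := by
          rw [hcoe, finsum_mem_coe_finset]
      _ = ∑ z ∈ hf.toFinset ×ˢ hg.toFinset,
            Real.sign ((fderiv ℝ f z.1).det) * Real.sign ((fderiv ℝ g z.2).det) := by
          refine Finset.sum_congr rfl fun z hz => ?_
          have hz' : z ∈ F ⁻¹' {0} := by rw [hcoe]; exact_mod_cast hz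
          rw [hdet z hz']
          have hz'' := hz'; rw [hpre] at hz''
          exact my_sign_mul _ _ (hfd z.1 hz''.1).2 (hgd z.2 hz''.2).2
      _ = (∑ x ∈ hf.toFinset, Real.sign ((fderiv ℝ f x).det)) *
            (∑ y ∈ hg.toFinset, Real.sign ((fderiv ℝ g y).det)) := by
          rw [Finset.sum_mul_sum, Finset.sum_product]
      _ = _ := by
          rw [← finsum_mem_coe_finset, ← finsum_mem_coe_finset,
            hf.coe_toFinset, hg.coe_toFinset]
end

section
/- Let η > 0, μ > 0 and Δ ≠ 0 be real numbers, and let g : ℝ → ℝ be differentiable with g(x) ≥ 1 for all x and g ≡ 1 on some neighborhood of 0. Define ρ : ℝ² → ℝ² by ρ(ξ, x) = (η ξ² − μ g(x)², Δ ξ x). Then the zero set of ρ is exactly {(√(μ/η), 0), (−√(μ/η), 0)}, at each zero the derivative Dρ is invertible with det Dρ = 2ηΔξ², and Σ_{z ∈ ρ⁻¹({0})} sign(det Dρ(z)) = 2·sign(Δ). If instead μ < 0 (with η > 0, Δ ≠ 0), then ρ has no zeros in ℝ². -/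
/-- The vector field `ρ(ξ,x) = (η ξ² - μ g(x)², Δ ξ x)` of the regularized 1d
superconductor with a domain wall in the order parameter. -/
noncomputable def rho14 (η μ Δ : ℝ) (g : ℝ → ℝ) : ℝ × ℝ → ℝ × ℝ :=
  fun q => (η * q.1 ^ 2 - μ * g q.2 ^ 2, Δ * q.1 * q.2)

open ContinuousLinearMap in
lemma rho14_hasFDerivAt (η μ Δ : ℝ) (g : ℝ → ℝ)
    (hgloc : ∀ᶠ x in nhds (0 : ℝ), g x = 1) (a : ℝ) :
    HasFDerivAt (rho14 η μ Δ g)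
      (((2 * η * a) • fst ℝ ℝ ℝ).prod ((Δ * a) • snd ℝ ℝ ℝ)) (a, 0) := by
  have hev : ∀ᶠ q in nhds ((a, 0) : ℝ × ℝ), g q.2 = 1 :=
    (continuous_snd.tendsto ((a, 0) : ℝ × ℝ)).eventually hgloc
  have hF : HasFDerivAt (fun q : ℝ × ℝ => (η * q.1 ^ 2 - μ, Δ * q.1 * q.2))
      (((2 * η * a) • fst ℝ ℝ ℝ).prod ((Δ * a) • snd ℝ ℝ ℝ)) (a, 0) := by
    have h1 : HasFDerivAt (fun q : ℝ × ℝ => η * q.1 ^ 2 - μ)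
        ((2 * η * a) • fst ℝ ℝ ℝ) (a, 0) := by
      have h0 : HasFDerivAt (fun q : ℝ × ℝ => η * (q.1 * q.1) - μ)
          ((2 * η * a) • fst ℝ ℝ ℝ) (a, 0) := by
        have := (((hasFDerivAt_fst (𝕜 := ℝ) (p := ((a, 0) : ℝ × ℝ))).mul
          (hasFDerivAt_fst (𝕜 := ℝ) (p := ((a, 0) : ℝ × ℝ)))).const_mul η).sub_const μ
        refine this.congr_fderiv ?_
        ext v <;> simp <;> ring
      have : (fun q : ℝ × ℝ => η * q.1 ^ 2 - μ) = fun q : ℝ × ℝ => η * (q.1 * q.1) - μ := by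
        funext q; ring
      rw [this]; exact h0
    have h2 : HasFDerivAt (fun q : ℝ × ℝ => Δ * q.1 * q.2)
        ((Δ * a) • snd ℝ ℝ ℝ) (a, 0) := by
      have := ((hasFDerivAt_fst (𝕜 := ℝ) (p := ((a, 0) : ℝ × ℝ))).const_mul Δ).mul
        (hasFDerivAt_snd (𝕜 := ℝ) (p := ((a, 0) : ℝ × ℝ)))
      refine this.congr_fderiv ?_
      ext v <;> simp
    exact h1.prodMk h2
  apply hF.congr_of_eventuallyEq
  filter_upwards [hev] with q hq
  simp [rho14, hq]

open ContinuousLinearMap in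
lemma det_aux (c d : ℝ) :
    (((c • fst ℝ ℝ ℝ).prod (d • snd ℝ ℝ ℝ)).det) = c * d := by
  rw [ContinuousLinearMap.det, ← LinearMap.det_toMatrix (Module.Basis.finTwoProd ℝ),
    Matrix.det_fin_two]
  simp [LinearMap.toMatrix_apply, Module.Basis.finTwoProd]

lemma rho14_fderiv_det (η μ Δ : ℝ) (g : ℝ → ℝ)
    (hgloc : ∀ᶠ x in nhds (0 : ℝ), g x = 1) (a : ℝ) :
    (fderiv ℝ (rho14 η μ Δ g) (a, 0)).det = 2 * η * Δ * a ^ 2 := by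
  rw [(rho14_hasFDerivAt η μ Δ g hgloc a).fderiv, det_aux]
  ring

/-- for `η > 0`, `μ > 0`, `Δ ≠ 0` and `g ≥ 1` differentiable
with `g ≡ 1` near `0`, the zero set of `ρ` is `{(±√(μ/η), 0)}`, the Jacobian
determinant there is `2ηΔξ² ≠ 0`, and the signed zero count is `2 sign Δ`;
for `μ < 0` the map `ρ` has no zeros. -/
theorem stmt_14 (η μ Δ : ℝ) (hη : 0 < η) (hΔ : Δ ≠ 0)
    (g : ℝ → ℝ) (hgdiff : Differentiable ℝ g) (hg1 : ∀ x, 1 ≤ g x)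
    (hgloc : ∀ᶠ x in nhds (0 : ℝ), g x = 1) :
    (0 < μ →
      (rho14 η μ Δ g ⁻¹' {0} =
        {(Real.sqrt (μ / η), 0), (-Real.sqrt (μ / η), 0)}) ∧
      (∀ z ∈ rho14 η μ Δ g ⁻¹' {0},
        DifferentiableAt ℝ (rho14 η μ Δ g) z ∧
        (fderiv ℝ (rho14 η μ Δ g) z).det = 2 * η * Δ * z.1 ^ 2 ∧
        (fderiv ℝ (rho14 η μ Δ g) z).det ≠ 0) ∧
      (∑ᶠ z ∈ rho14 η μ Δ g ⁻¹' {0},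
          Real.sign ((fderiv ℝ (rho14 η μ Δ g) z).det)) = 2 * Real.sign Δ) ∧
    (μ < 0 → rho14 η μ Δ g ⁻¹' {0} = ∅) := by
  have hg0 : g 0 = 1 := hgloc.self_of_nhds
  constructor
  · intro hμ
    set s : ℝ := Real.sqrt (μ / η) with hs
    have hμη : 0 < μ / η := div_pos hμ hη
    have hs2 : s ^ 2 = μ / η := Real.sq_sqrt hμη.le
    have hspos : 0 < s := Real.sqrt_pos.mpr hμη
    -- zero set
    have hzero : rho14 η μ Δ g ⁻¹' {0} = {(s, 0), (-s, 0)} := by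
      ext q
      simp only [Set.mem_preimage, Set.mem_singleton_iff, Set.mem_insert_iff,
        rho14, Prod.ext_iff, Prod.mk.injEq, Prod.fst_zero, Prod.snd_zero]
      constructor
      · rintro ⟨h1, h2⟩
        have hq2 : q.2 = 0 := by
          rcases mul_eq_zero.mp h2 with h | h
          · rcases mul_eq_zero.mp h with h | h
            · exact absurd h hΔ
            · -- q.1 = 0 : contradiction
              exfalso
              have hg : 1 ≤ g q.2 ^ 2 := one_le_pow₀ (hg1 q.2)
              have hE : η * q.1 ^ 2 = μ * g q.2 ^ 2 := by linarith [sub_eq_zero.mp h1]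
              rw [h] at hE
              nlinarith
          · exact h
        have hg2 : g q.2 = 1 := by rw [hq2, hg0]
        have h1' : η * q.1 ^ 2 = μ := by
          have := sub_eq_zero.mp h1
          rw [hg2] at this; linarith
        have hq1 : q.1 ^ 2 = μ / η := by field_simp at h1' ⊢; linarith
        have : |q.1| = s := by
          rw [hs, ← hq1, Real.sqrt_sq_eq_abs]
        rcases abs_cases q.1 with ⟨h, _⟩ | ⟨h, _⟩
        · left; exact ⟨by rw [← h, this], hq2⟩
        · right
          refine ⟨by linarith [h ▸ this], hq2⟩
      · have hval : η * s ^ 2 - μ * g 0 ^ 2 = 0 := by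
          rw [hs2, hg0]; field_simp; ring
        rintro (⟨h1, h2⟩ | ⟨h1, h2⟩) <;> rw [h1, h2] <;>
          refine ⟨?_, by ring⟩
        · exact hval
        · rw [neg_pow]; simpa using hval
    have hne : ((s, 0) : ℝ × ℝ) ≠ (-s, 0) := by
      intro h
      have := congrArg Prod.fst h
      simp only at this
      nlinarith
    refine ⟨hzero, ?_, ?_⟩
    · intro z hz
      rw [hzero] at hz
      have key : ∀ a : ℝ, a ^ 2 = μ / η →
          DifferentiableAt ℝ (rho14 η μ Δ g) (a, 0) ∧
          (fderiv ℝ (rho14 η μ Δ g) (a, 0)).det = 2 * η * Δ * ((a, 0) : ℝ × ℝ).1 ^ 2 ∧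
          (fderiv ℝ (rho14 η μ Δ g) (a, 0)).det ≠ 0 := by
        intro a ha
        refine ⟨(rho14_hasFDerivAt η μ Δ g hgloc a).differentiableAt,
          rho14_fderiv_det η μ Δ g hgloc a, ?_⟩
        rw [rho14_fderiv_det η μ Δ g hgloc a]
        show 2 * η * Δ * a ^ 2 ≠ 0
        rw [ha]
        have h0 : 0 < η * (μ / η) := mul_pos hη hμη
        rcases hΔ.lt_or_gt with h | h
        · nlinarith
        · nlinarith
      rcases hz with h | h <;> subst h
      · exact key s hs2
      · exact key (-s) (by rw [neg_pow]; simp [hs2])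
    · rw [hzero]
      have key : ∀ a : ℝ, a ^ 2 = μ / η →
          Real.sign ((fderiv ℝ (rho14 η μ Δ g) (a, 0)).det) = Real.sign Δ := by
        intro a ha
        rw [rho14_fderiv_det η μ Δ g hgloc a, ha]
        have h0 : 0 < η * (μ / η) := mul_pos hη hμη
        rcases hΔ.lt_or_gt with h | h
        · rw [Real.sign_of_neg h, Real.sign_of_neg (by nlinarith)]
        · rw [Real.sign_of_pos h, Real.sign_of_pos (by nlinarith)]
      rw [finsum_mem_pair hne, key s hs2, key (-s) (by rw [neg_pow]; simp [hs2])]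
      ring
  · intro hμ
    ext q
    simp only [Set.mem_preimage, Set.mem_singleton_iff, Set.mem_empty_iff_false,
      iff_false, rho14, Prod.ext_iff, Prod.mk.injEq, Prod.fst_zero, Prod.snd_zero]
    rintro ⟨h1, _⟩
    have hg : 1 ≤ g q.2 ^ 2 := one_le_pow₀ (hg1 q.2)
    nlinarith [sq_nonneg q.1, sub_eq_zero.mp h1]
end

section
/- Let μ ≠ 0 and Δ ≠ 0 be real numbers and let h : ℝ → ℝ be differentiable at 0 with h(0) = 0. Define ρ : ℝ² → ℝ² by ρ(ξ, x) = (h(ξ) − μ x, Δ ξ). Then the zero set of ρ is exactly {(0, 0)}, the derivative Dρ(0,0) is invertible with det Dρ(0,0) = μΔ, and Σ_{z ∈ ρ⁻¹({0})} sign(det Dρ(z)) = sign(μΔ). -/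
noncomputable def rho15 (μ Δ : ℝ) (h : ℝ → ℝ) : ℝ × ℝ → ℝ × ℝ :=
  fun q => (h q.1 - μ * q.2, Δ * q.1)

section aux
variable (μ Δ : ℝ) (h : ℝ → ℝ)

noncomputable def L15 (a : ℝ →L[ℝ] ℝ) : ℝ × ℝ →L[ℝ] ℝ × ℝ :=
  ((a.comp (ContinuousLinearMap.fst ℝ ℝ ℝ)) - μ • (ContinuousLinearMap.snd ℝ ℝ ℝ)).prod
    (Δ • (ContinuousLinearMap.fst ℝ ℝ ℝ))

lemma hasFDeriv15 (hdiff : DifferentiableAt ℝ h 0) :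
    HasFDerivAt (rho15 μ Δ h) (L15 μ Δ (fderiv ℝ h 0)) (0, 0) := by
  have h1 : HasFDerivAt (fun q : ℝ × ℝ => h q.1)
      ((fderiv ℝ h 0).comp (ContinuousLinearMap.fst ℝ ℝ ℝ)) (0, 0) :=
    (hdiff.hasFDerivAt).comp (0, 0) (hasFDerivAt_fst)
  have h2 : HasFDerivAt (fun q : ℝ × ℝ => μ * q.2)
      (μ • (ContinuousLinearMap.snd ℝ ℝ ℝ)) (0, 0) :=
    (hasFDerivAt_snd).const_smul μ
  have h3 : HasFDerivAt (fun q : ℝ × ℝ => Δ * q.1)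
      (Δ • (ContinuousLinearMap.fst ℝ ℝ ℝ)) (0, 0) :=
    (hasFDerivAt_fst).const_smul Δ
  have := HasFDerivAt.prodMk (h1.sub h2) h3
  exact this.congr_fderiv rfl

lemma det15 (a : ℝ →L[ℝ] ℝ) : (L15 μ Δ a).det = μ * Δ := by
  have : (L15 μ Δ a).det =
      (LinearMap.toMatrix (Module.Basis.finTwoProd ℝ) (Module.Basis.finTwoProd ℝ)
        (L15 μ Δ a : ℝ × ℝ →ₗ[ℝ] ℝ × ℝ)).det := by
    rw [ContinuousLinearMap.det, ← LinearMap.det_toMatrix (Module.Basis.finTwoProd ℝ)]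
  rw [this, Matrix.det_fin_two]
  simp [LinearMap.toMatrix_apply, L15, Module.Basis.finTwoProd, smul_eq_mul]

end aux

/-- for `μ ≠ 0`, `Δ ≠ 0` and `h` differentiable at `0` with
`h 0 = 0`, the zero set of `ρ` is `{(0,0)}`, the derivative there is invertible
with Jacobian determinant `μΔ`, and the signed zero count is `sign (μΔ)`. -/
theorem stmt_15 (μ Δ : ℝ) (hμ : μ ≠ 0) (hΔ : Δ ≠ 0) (h : ℝ → ℝ)
    (hdiff : DifferentiableAt ℝ h 0) (h0 : h 0 = 0) :
    (rho15 μ Δ h ⁻¹' {0} = {(0, 0)}) ∧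
    DifferentiableAt ℝ (rho15 μ Δ h) (0, 0) ∧
    (fderiv ℝ (rho15 μ Δ h) (0, 0)).det = μ * Δ ∧
    (fderiv ℝ (rho15 μ Δ h) (0, 0)).det ≠ 0 ∧
    (∑ᶠ z ∈ rho15 μ Δ h ⁻¹' {0}, Real.sign ((fderiv ℝ (rho15 μ Δ h) z).det)) =
      Real.sign (μ * Δ) := by
  have hF := hasFDeriv15 μ Δ h hdiff
  have hfd : fderiv ℝ (rho15 μ Δ h) (0, 0) = L15 μ Δ (fderiv ℝ h 0) := hF.fderiv
  have hzero : rho15 μ Δ h ⁻¹' {0} = {(0, 0)} := by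
    ext q
    simp only [Set.mem_preimage, Set.mem_singleton_iff, rho15, Prod.ext_iff, Prod.fst_zero,
      Prod.snd_zero]
    constructor
    · rintro ⟨he, hx⟩
      have hq1 : q.1 = 0 := by
        rcases mul_eq_zero.mp hx with h' | h'
        · exact absurd h' hΔ
        · exact h'
      have hq2 : q.2 = 0 := by
        rw [hq1, h0] at he
        have : μ * q.2 = 0 := by linarith
        rcases mul_eq_zero.mp this with h' | h'
        · exact absurd h' hμ
        · exact h'
      exact ⟨hq1, hq2⟩
    · rintro ⟨h1, h2⟩; rw [h1, h2]; simp [h0]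
  have hdet : (fderiv ℝ (rho15 μ Δ h) (0, 0)).det = μ * Δ := by
    rw [hfd, det15]
  refine ⟨hzero, hF.differentiableAt, hdet, by rw [hdet]; exact mul_ne_zero hμ hΔ, ?_⟩
  rw [hzero, finsum_mem_singleton, hdet]
end

section
/- Let η > 0, μ > 0 and Δ₁, Δ₂ ≠ 0 be real numbers, and let g : ℝ → ℝ be differentiable with g(x) ≥ 1 for all x and g ≡ 1 on some neighborhood of 0; set w(x) = x/g(x). Define ρ : ℝ³ → ℝ³ by ρ(ξ₁, ξ₂, x) = (Δ₁ w(x) ξ₁ ξ₂, Δ₂(ξ₁² − ξ₂²), η(ξ₁² + ξ₂²) − μ g(x)²). Then the zero set of ρ consists of exactly the four points (s·√(μ/(2η)), t·√(μ/(2η)), 0) with s, t ∈ {+1, −1}; at each zero the derivative Dρ is invertible with det Dρ = 8ηΔ₁Δ₂(ξ₁ξ₂)² (in particular of sign sign(Δ₁Δ₂)); and Σ_{z ∈ ρ⁻¹({0})} sign(det Dρ(z)) = 4·sign(Δ₁Δ₂). -/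
/-- The vector field
`ρ(ξ₁,ξ₂,x) = (Δ₁ (x/g(x)) ξ₁ξ₂, Δ₂(ξ₁² - ξ₂²), η(ξ₁² + ξ₂²) - μ g(x)²)`
of the regularized 2d d-wave superconductor with a domain wall in the order
parameter `Δ₁`. -/
noncomputable def rho17 (η μ Δ₁ Δ₂ : ℝ) (g : ℝ → ℝ) :
    (Fin 3 → ℝ) → (Fin 3 → ℝ) :=
  fun v => ![Δ₁ * (v 2 / g (v 2)) * v 0 * v 1,
             Δ₂ * (v 0 ^ 2 - v 1 ^ 2),
             η * (v 0 ^ 2 + v 1 ^ 2) - μ * g (v 2) ^ 2]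

/-- The Jacobian matrix of `rho17` at a point where `g ≡ 1` locally. -/
noncomputable def jac17 (η Δ₁ Δ₂ : ℝ) (z : Fin 3 → ℝ) : Matrix (Fin 3) (Fin 3) ℝ :=
  ![![Δ₁ * z 2 * z 1, Δ₁ * z 2 * z 0, Δ₁ * (z 0 * z 1)],
    ![2 * Δ₂ * z 0, -(2 * Δ₂ * z 1), 0],
    ![2 * η * z 0, 2 * η * z 1, 0]]

lemma hasFDerivAt_rho17 (η μ Δ₁ Δ₂ : ℝ) (g : ℝ → ℝ)
    (hgloc : ∀ᶠ x in nhds (0 : ℝ), g x = 1) (z : Fin 3 → ℝ) (hz : z 2 = 0) :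
    HasFDerivAt (rho17 η μ Δ₁ Δ₂ g)
      (LinearMap.toContinuousLinearMap (Matrix.toLin' (jac17 η Δ₁ Δ₂ z))) z := by
  have hgz : ∀ᶠ v : Fin 3 → ℝ in nhds z, g (v 2) = 1 := by
    have hc : Filter.Tendsto (fun v : Fin 3 → ℝ => v 2) (nhds z) (nhds (0 : ℝ)) := by
      have := (continuous_apply (2 : Fin 3)).tendsto z
      rwa [hz] at this
    exact hc.eventually hgloc
  have heq : rho17 η μ Δ₁ Δ₂ g =ᶠ[nhds z]
      (fun v : Fin 3 → ℝ => ![Δ₁ * v 2 * v 0 * v 1, Δ₂ * (v 0 * v 0 - v 1 * v 1),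
        η * (v 0 * v 0 + v 1 * v 1) - μ]) := by
    filter_upwards [hgz] with v hv
    simp [rho17, hv, pow_two]
  refine HasFDerivAt.congr_of_eventuallyEq ?_ heq
  rw [hasFDerivAt_pi']
  have hp : ∀ j : Fin 3, HasFDerivAt (fun v : Fin 3 → ℝ => v j)
      (ContinuousLinearMap.proj (R := ℝ) (φ := fun _ : Fin 3 => ℝ) j) z :=
    fun j => hasFDerivAt_apply (𝕜 := ℝ) j z
  intro i
  fin_cases i
  · simp only [Matrix.cons_val_zero]
    refine ((((hp 2).const_mul Δ₁).mul (hp 0)).mul (hp 1)).congr_fderiv ?_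
    ext v
    show _ = (Matrix.mulVec (jac17 η Δ₁ Δ₂ z) v) 0
    simp [jac17, Matrix.toLin'_apply, Matrix.mulVec, dotProduct,
      Fin.sum_univ_three]
    ring
  · simp only [Matrix.cons_val_one, Matrix.head_cons]
    refine ((((hp 0).mul (hp 0)).sub ((hp 1).mul (hp 1))).const_mul Δ₂).congr_fderiv ?_
    ext v
    show _ = (Matrix.mulVec (jac17 η Δ₁ Δ₂ z) v) 1
    simp [jac17, Matrix.toLin'_apply, Matrix.mulVec, dotProduct,
      Fin.sum_univ_three]
    ring
  · simp only [Matrix.cons_val_two, Matrix.tail_cons, Matrix.head_cons]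
    refine (((((hp 0).mul (hp 0)).add ((hp 1).mul (hp 1))).const_mul η).sub_const μ).congr_fderiv ?_
    ext v
    show _ = (Matrix.mulVec (jac17 η Δ₁ Δ₂ z) v) 2
    simp [jac17, Matrix.toLin'_apply, Matrix.mulVec, dotProduct,
      Fin.sum_univ_three]
    ring

lemma det_jac17 (η Δ₁ Δ₂ : ℝ) (z : Fin 3 → ℝ) (hz : z 2 = 0) :
    (LinearMap.toContinuousLinearMap (Matrix.toLin' (jac17 η Δ₁ Δ₂ z))).det
      = 8 * η * Δ₁ * Δ₂ * (z 0 * z 1) ^ 2 := by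
  have h1 : (LinearMap.toContinuousLinearMap (Matrix.toLin' (jac17 η Δ₁ Δ₂ z))).det
      = LinearMap.det (Matrix.toLin' (jac17 η Δ₁ Δ₂ z)) := by
    rw [ContinuousLinearMap.det, LinearMap.coe_toContinuousLinearMap]
  rw [h1, LinearMap.det_toLin', Matrix.det_fin_three]
  simp [jac17, hz]
  ring

/-- for `η, μ > 0`, `Δ₁, Δ₂ ≠ 0` and `g ≥ 1` differentiable with
`g ≡ 1` near `0`, the zero set of `ρ` consists of the four points
`(±√(μ/(2η)), ±√(μ/(2η)), 0)`; at each zero the Jacobian determinant is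
`8ηΔ₁Δ₂(ξ₁ξ₂)² ≠ 0` of sign `sign(Δ₁Δ₂)`, and the signed zero count is
`4 sign(Δ₁Δ₂)`. -/
theorem stmt_17 (η μ Δ₁ Δ₂ : ℝ) (hη : 0 < η) (hμ : 0 < μ)
    (h1 : Δ₁ ≠ 0) (h2 : Δ₂ ≠ 0)
    (g : ℝ → ℝ) (hgdiff : Differentiable ℝ g) (hg1 : ∀ x, 1 ≤ g x)
    (hgloc : ∀ᶠ x in nhds (0 : ℝ), g x = 1) :
    (rho17 η μ Δ₁ Δ₂ g ⁻¹' {0} =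
      {![Real.sqrt (μ / (2 * η)), Real.sqrt (μ / (2 * η)), 0],
        ![Real.sqrt (μ / (2 * η)), -Real.sqrt (μ / (2 * η)), 0],
        ![-Real.sqrt (μ / (2 * η)), Real.sqrt (μ / (2 * η)), 0],
        ![-Real.sqrt (μ / (2 * η)), -Real.sqrt (μ / (2 * η)), 0]}) ∧
    (∀ z ∈ rho17 η μ Δ₁ Δ₂ g ⁻¹' {0},
      DifferentiableAt ℝ (rho17 η μ Δ₁ Δ₂ g) z ∧
      (fderiv ℝ (rho17 η μ Δ₁ Δ₂ g) z).det = 8 * η * Δ₁ * Δ₂ * (z 0 * z 1) ^ 2 ∧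
      (fderiv ℝ (rho17 η μ Δ₁ Δ₂ g) z).det ≠ 0 ∧
      Real.sign ((fderiv ℝ (rho17 η μ Δ₁ Δ₂ g) z).det) = Real.sign (Δ₁ * Δ₂)) ∧
    (∑ᶠ z ∈ rho17 η μ Δ₁ Δ₂ g ⁻¹' {0},
        Real.sign ((fderiv ℝ (rho17 η μ Δ₁ Δ₂ g) z).det)) =
      4 * Real.sign (Δ₁ * Δ₂) := by
  classical
  set a := Real.sqrt (μ / (2 * η)) with ha_def
  have h2η : (0 : ℝ) < 2 * η := by linarith
  have haq : a ^ 2 = μ / (2 * η) := Real.sq_sqrt (le_of_lt (div_pos hμ h2η))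
  have hapos : 0 < a := Real.sqrt_pos.mpr (div_pos hμ h2η)
  have hane : a ≠ 0 := ne_of_gt hapos
  have hg0 : g 0 = 1 := hgloc.self_of_nhds
  have haμ : 2 * η * a ^ 2 = μ := by rw [haq]; field_simp
  -- the zero set
  have hset : rho17 η μ Δ₁ Δ₂ g ⁻¹' {0} =
      ({![a, a, 0], ![a, -a, 0], ![-a, a, 0], ![-a, -a, 0]} : Set (Fin 3 → ℝ)) := by
    ext v
    simp only [Set.mem_preimage, Set.mem_singleton_iff, Set.mem_insert_iff]
    constructor
    · intro h
      have e0 : Δ₁ * (v 2 / g (v 2)) * v 0 * v 1 = 0 := by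
        have := congrFun h 0; simpa [rho17] using this
      have e1 : Δ₂ * (v 0 ^ 2 - v 1 ^ 2) = 0 := by
        have := congrFun h 1; simpa [rho17] using this
      have e2 : η * (v 0 ^ 2 + v 1 ^ 2) - μ * g (v 2) ^ 2 = 0 := by
        have := congrFun h 2; simpa [rho17] using this
      have hsq : v 0 ^ 2 = v 1 ^ 2 := by
        rcases mul_eq_zero.mp e1 with h' | h'
        · exact absurd h' h2
        · linarith
      have hgv : 1 ≤ g (v 2) := hg1 _
      have hv0sq : 0 < v 0 ^ 2 := by nlinarith [hgv, e2, hsq, sq_nonneg (g (v 2) - 1), hμ, hη]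
      have hv0 : v 0 ≠ 0 := by
        intro h0; rw [h0] at hv0sq; simp at hv0sq
      have hv1 : v 1 ≠ 0 := by
        intro h0; rw [h0] at hsq; nlinarith [hv0sq, hsq]
      have hdiv : v 2 / g (v 2) = 0 := by
        rcases mul_eq_zero.mp e0 with h' | h'
        · rcases mul_eq_zero.mp h' with h'' | h''
          · rcases mul_eq_zero.mp h'' with h3 | h3
            · exact absurd h3 h1
            · exact h3
          · exact absurd h'' hv0
        · exact absurd h' hv1
      have hgne : g (v 2) ≠ 0 := by
        have : (0 : ℝ) < g (v 2) := by linarith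
        exact this.ne'
      have hv2 : v 2 = 0 := by
        rcases div_eq_zero_iff.mp hdiv with h' | h'
        · exact h'
        · exact absurd h' hgne
      have hgv1 : g (v 2) = 1 := by rw [hv2, hg0]
      rw [hgv1] at e2
      have hva : v 0 ^ 2 = a ^ 2 := by
        rw [haq, eq_div_iff (ne_of_gt h2η)]
        nlinarith [e2, hsq]
      rcases sq_eq_sq_iff_eq_or_eq_neg.mp hva with h0 | h0 <;>
        rcases sq_eq_sq_iff_eq_or_eq_neg.mp hsq.symm with hx | hx
      · left; funext i; fin_cases i <;> simp [h0, hx, hv2]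
      · right; left; funext i; fin_cases i <;> simp [h0, hx, hv2]
      · right; right; right; funext i; fin_cases i <;> simp [h0, hx, hv2]
      · right; right; left; funext i; fin_cases i <;> simp [h0, hx, hv2]
    · intro h
      rcases h with h | h | h | h <;> subst h <;> (funext i; fin_cases i) <;>
        simp [rho17, hg0] <;> ring_nf <;> nlinarith [haμ]
  -- data at each zero
  have hmem : ∀ z ∈ rho17 η μ Δ₁ Δ₂ g ⁻¹' {0}, z 2 = 0 ∧ z 0 ≠ 0 ∧ z 1 ≠ 0 := by
    intro z hz
    rw [hset] at hz
    rcases hz with h | h | h | h <;> subst h <;>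
      exact ⟨by simp, by simp [hane], by simp [hane]⟩
  have hmain : ∀ z ∈ rho17 η μ Δ₁ Δ₂ g ⁻¹' {0},
      DifferentiableAt ℝ (rho17 η μ Δ₁ Δ₂ g) z ∧
      (fderiv ℝ (rho17 η μ Δ₁ Δ₂ g) z).det = 8 * η * Δ₁ * Δ₂ * (z 0 * z 1) ^ 2 ∧
      (fderiv ℝ (rho17 η μ Δ₁ Δ₂ g) z).det ≠ 0 ∧
      Real.sign ((fderiv ℝ (rho17 η μ Δ₁ Δ₂ g) z).det) = Real.sign (Δ₁ * Δ₂) := by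
    intro z hz
    obtain ⟨hz2, hz0, hz1⟩ := hmem z hz
    have hD := hasFDerivAt_rho17 η μ Δ₁ Δ₂ g hgloc z hz2
    have hfd := hD.fderiv
    have hdet : (fderiv ℝ (rho17 η μ Δ₁ Δ₂ g) z).det
        = 8 * η * Δ₁ * Δ₂ * (z 0 * z 1) ^ 2 := by
      rw [hfd]; exact det_jac17 η Δ₁ Δ₂ z hz2
    have hzz : z 0 * z 1 ≠ 0 := mul_ne_zero hz0 hz1
    have hsqpos : 0 < (z 0 * z 1) ^ 2 :=
      lt_of_le_of_ne (sq_nonneg _) (Ne.symm (pow_ne_zero 2 hzz))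
    have hcpos : 0 < 8 * η * (z 0 * z 1) ^ 2 := by positivity
    have hdetval : (fderiv ℝ (rho17 η μ Δ₁ Δ₂ g) z).det
        = (8 * η * (z 0 * z 1) ^ 2) * (Δ₁ * Δ₂) := by rw [hdet]; ring
    refine ⟨hD.differentiableAt, hdet, ?_, ?_⟩
    · rw [hdetval]
      exact mul_ne_zero (ne_of_gt hcpos) (mul_ne_zero h1 h2)
    · rcases lt_or_gt_of_ne (mul_ne_zero h1 h2) with hlt | hgt
      · rw [Real.sign_of_neg hlt, Real.sign_of_neg (by nlinarith [hdetval, hcpos, hlt] :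
          (fderiv ℝ (rho17 η μ Δ₁ Δ₂ g) z).det < 0)]
      · rw [Real.sign_of_pos hgt, Real.sign_of_pos (by nlinarith [hdetval, hcpos, hgt] :
          0 < (fderiv ℝ (rho17 η μ Δ₁ Δ₂ g) z).det)]
  refine ⟨hset, hmain, ?_⟩
  -- the sum
  have hne : a ≠ -a := by intro h; linarith
  have h12 : ![a, a, 0] ≠ ![a, -a, 0] := fun h => hne (by simpa using congrFun h 1)
  have h13 : ![a, a, 0] ≠ ![-a, a, 0] := fun h => hne (by simpa using congrFun h 0)
  have h14 : ![a, a, 0] ≠ ![-a, -a, 0] := fun h => hne (by simpa using congrFun h 0)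
  have h23 : ![a, -a, 0] ≠ ![-a, a, 0] := fun h => hne (by simpa using congrFun h 0)
  have h24 : ![a, -a, 0] ≠ ![-a, -a, 0] := fun h => hne (by simpa using congrFun h 0)
  have h34 : ![-a, a, 0] ≠ ![-a, -a, 0] := fun h => hne (by simpa using congrFun h 1)
  have hcoe : ({![a, a, 0], ![a, -a, 0], ![-a, a, 0], ![-a, -a, 0]} : Set (Fin 3 → ℝ))
      = (↑({![a, a, 0], ![a, -a, 0], ![-a, a, 0], ![-a, -a, 0]} : Finset (Fin 3 → ℝ))) := by
    simp
  rw [hset, hcoe, finsum_mem_coe_finset]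
  have hconst : ∀ z ∈ ({![a, a, 0], ![a, -a, 0], ![-a, a, 0], ![-a, -a, 0]} :
      Finset (Fin 3 → ℝ)),
      Real.sign ((fderiv ℝ (rho17 η μ Δ₁ Δ₂ g) z).det) = Real.sign (Δ₁ * Δ₂) := by
    intro z hz
    have hz' : z ∈ rho17 η μ Δ₁ Δ₂ g ⁻¹' {0} := by
      rw [hset]
      simpa using hz
    exact (hmain z hz').2.2.2
  rw [Finset.sum_congr rfl hconst, Finset.sum_const]
  have hcard : ({![a, a, 0], ![a, -a, 0], ![-a, a, 0], ![-a, -a, 0]} :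
      Finset (Fin 3 → ℝ)).card = 4 := by
    rw [Finset.card_insert_of_notMem (by simp [h12, h13, h14]),
      Finset.card_insert_of_notMem (by simp [h23, h24]),
      Finset.card_insert_of_notMem (by simp [h34]), Finset.card_singleton]
  rw [hcard, nsmul_eq_mul]
  norm_num
end
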